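/- Let p be a prime and s a positive integer. Then p divides the denominator of the s-th Bernoulli number B_s (written in lowest terms) if and only if p - 1 divides 2s. -/

import Mathlib

open Finset

lemma VSC.padicNorm_pow (p : ℕ) [hp : Fact p.Prime] (x : ℚ) (n : ℕ) :
    padicNorm p (x ^ n) = padicNorm p x ^ n := by
  induction n with
  | zero => simp [padicNorm.one]
  | succ n ih => rw [pow_succ, padicNorm.mul, ih, pow_succ]

lemma VSC.dvd_den_iff (p : ℕ) [hp : Fact p.Prime] (q : ℚ) :
    p ∣ q.den ↔ 1 < padicNorm p q := by
  rcases eq_or_ne q 0 with rfl | hq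
  · simp [padicNorm.zero, hp.out.one_lt.ne']
  · have hden0 : (q.den : ℚ) ≠ 0 := by exact_mod_cast q.den_ne_zero
    have hsplit : padicNorm p q = padicNorm p (q.num : ℚ) / padicNorm p (q.den : ℚ) := by
      conv_lhs => rw [← Rat.num_div_den q]
      rw [padicNorm.div]
    constructor
    · intro h
      have hnum : ¬ (p:ℤ) ∣ q.num := by
        intro hd
        have h1 : p ∣ q.num.natAbs := Int.natCast_dvd_natCast.mp (by rwa [Int.dvd_natAbs])
        have : p ∣ 1 := q.reduced ▸ Nat.dvd_gcd h1 h
        exact hp.out.one_lt.ne' (Nat.eq_one_of_dvd_one this)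
      have h1 : padicNorm p (q.num : ℚ) = 1 := padicNorm.int_eq_one_iff _ |>.mpr hnum
      have h2 : padicNorm p (q.den : ℚ) < 1 := padicNorm.nat_lt_one_iff _ |>.mpr h
      have h3 : 0 < padicNorm p (q.den : ℚ) :=
        lt_of_le_of_ne (padicNorm.nonneg _) (Ne.symm (padicNorm.nonzero (by exact_mod_cast q.den_ne_zero)))
      rw [hsplit, h1]
      exact (one_lt_div h3).mpr h2
    · intro h
      by_contra hd
      have h2 : padicNorm p (q.den : ℚ) = 1 := padicNorm.nat_eq_one_iff _ |>.mpr hd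
      rw [hsplit, h2, div_one] at h
      exact absurd (padicNorm.of_int q.num) (not_le.mpr h)



lemma VSC.padicNorm_nat (p : ℕ) [hp : Fact p.Prime] (j : ℕ) (hj : j ≠ 0) :
    padicNorm p (j : ℚ) = (p:ℚ) ^ (-(padicValNat p j : ℤ)) := by
  rw [padicNorm.eq_zpow_of_nonzero (by exact_mod_cast hj)]
  congr 1
  rw [show ((j:ℚ)) = ((j:ℤ):ℚ) by push_cast; ring, padicValRat.of_int]
  norm_num [padicValInt]

lemma VSC.padicNorm_pow_div_le (p : ℕ) [hp : Fact p.Prime] (j k : ℕ) (hj : 0 < j)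
    (hlt : j < p ^ k) :
    padicNorm p ((p:ℚ) ^ j / j) ≤ (p:ℚ) ^ ((k:ℤ) - 1 - j) := by
  have hp1 : 1 < p := hp.out.one_lt
  have hp0 : (p:ℚ) ≠ 0 := by exact_mod_cast hp.out.pos.ne'
  have hv : padicValNat p j < k := by
    by_contra hvk
    push_neg at hvk
    have h1 : p ^ k ≤ p ^ padicValNat p j := Nat.pow_le_pow_right hp1.le hvk
    have h2 : p ^ padicValNat p j ≤ j := Nat.le_of_dvd hj (pow_padicValNat_dvd)
    omega
  have hpn : padicNorm p ((p:ℚ) ^ j / j) = (p:ℚ) ^ ((padicValNat p j : ℤ) - j) := by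
    rw [padicNorm.div, VSC.padicNorm_pow, padicNorm.padicNorm_p_of_prime,
      VSC.padicNorm_nat p j hj.ne', inv_pow, ← zpow_natCast, ← zpow_neg, ← zpow_sub₀ hp0]
    congr 1
    ring
  rw [hpn]
  apply zpow_le_zpow_right₀ (by exact_mod_cast hp1.le)
  omega
open Finset

lemma VSC.key_identity (p n : ℕ) :
    (p:ℚ) * bernoulli n = ((∑ k ∈ range p, k ^ n : ℕ) : ℚ) -
      ∑ i ∈ range n, bernoulli i * (n.choose i) * ((p:ℚ) ^ (n + 1 - i) / (n + 1 - i : ℕ)) := by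
  have hfaul := sum_range_pow p n
  have hcast : ((∑ k ∈ range p, k ^ n : ℕ) : ℚ) = ∑ k ∈ range p, (k:ℚ) ^ n := by push_cast; ring
  rw [hcast, hfaul, Finset.sum_range_succ, Nat.choose_succ_self_right, Nat.add_sub_cancel_left]
  have hlast : bernoulli n * (n + 1 : ℕ) * (p:ℚ) ^ 1 / (n + 1) = (p:ℚ) * bernoulli n := by
    push_cast
    field_simp
  rw [hlast]
  have hterm : ∀ i ∈ range n,
      bernoulli i * ((n + 1).choose i) * (p:ℚ) ^ (n + 1 - i) / (n + 1) =
      bernoulli i * (n.choose i) * ((p:ℚ) ^ (n + 1 - i) / (n + 1 - i : ℕ)) := by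
    intro i hi
    rw [mem_range] at hi
    have hkey : (n.choose i : ℚ) * (n + 1) = ((n + 1).choose i : ℚ) * ((n + 1 - i : ℕ) : ℚ) := by
      exact_mod_cast congrArg (Nat.cast : ℕ → ℚ) (Nat.choose_mul_succ_eq n i)
    have h1 : ((n + 1 - i : ℕ) : ℚ) ≠ 0 := by
      have : 0 < n + 1 - i := by omega
      exact_mod_cast this.ne'
    have h2 : ((n : ℚ) + 1) ≠ 0 := by positivity
    field_simp
    linear_combination (-(bernoulli i * (p:ℚ) ^ (n + 1 - i))) * hkey
  rw [Finset.sum_congr rfl hterm]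
  ring

lemma VSC.norm_bernoulli_term_le (p : ℕ) [hp : Fact p.Prime] (n i : ℕ) (hi : i < n)
    (hber : padicNorm p (bernoulli i) ≤ p) :
    padicNorm p (bernoulli i * (n.choose i) * ((p:ℚ) ^ (n + 1 - i) / (n + 1 - i : ℕ))) ≤ 1 := by
  have hp1 : 1 < p := hp.out.one_lt
  have hppos : (0:ℚ) < p := by exact_mod_cast hp.out.pos
  set j := n + 1 - i with hj
  have hj0 : 0 < j := by omega
  have hnorm3 : padicNorm p ((p:ℚ) ^ j / j) ≤ (p:ℚ)⁻¹ := by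
    have := VSC.padicNorm_pow_div_le p j j hj0 (Nat.lt_pow_self hp1)
    calc padicNorm p ((p:ℚ) ^ j / j) ≤ (p:ℚ) ^ ((j:ℤ) - 1 - j) := this
      _ = (p:ℚ)⁻¹ := by rw [show (j:ℤ) - 1 - j = -1 by ring, zpow_neg_one]
  rw [padicNorm.mul, padicNorm.mul]
  calc padicNorm p (bernoulli i) * padicNorm p ((n.choose i : ℕ) : ℚ) *
        padicNorm p ((p:ℚ) ^ j / j)
      ≤ (p:ℚ) * 1 * (p:ℚ)⁻¹ := by
        apply mul_le_mul _ hnorm3 (padicNorm.nonneg _) (by positivity)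
        exact mul_le_mul hber (padicNorm.of_nat _) (padicNorm.nonneg _) hppos.le
    _ = 1 := by field_simp

lemma VSC.norm_p_mul_bernoulli_le_one (p : ℕ) [hp : Fact p.Prime] (n : ℕ) :
    padicNorm p ((p:ℚ) * bernoulli n) ≤ 1 := by
  induction n using Nat.strong_induction_on with
  | _ n ih =>
    have hppos : (0:ℚ) < p := by exact_mod_cast hp.out.pos
    have hber : ∀ i < n, padicNorm p (bernoulli i) ≤ p := by
      intro i hi
      have h1 := ih i hi
      rw [padicNorm.mul, padicNorm.padicNorm_p_of_prime] at h1
      calc padicNorm p (bernoulli i) = (p:ℚ) * ((p:ℚ)⁻¹ * padicNorm p (bernoulli i)) := by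
            field_simp
        _ ≤ (p:ℚ) * 1 := by
            apply mul_le_mul_of_nonneg_left h1 hppos.le
        _ = p := mul_one _
    rw [VSC.key_identity p n]
    refine le_trans padicNorm.sub (max_le (padicNorm.of_nat _) ?_)
    exact padicNorm.sum_le' (fun i hi => VSC.norm_bernoulli_term_le p n i (mem_range.mp hi)
      (hber i (mem_range.mp hi))) zero_le_one

lemma VSC.two_pow_aux (j : ℕ) (hj : 3 ≤ j) : j < 2 ^ (j - 1) := by
  induction j with
  | zero => omega
  | succ m ih =>
    rcases Nat.lt_or_ge m 3 with h | h
    · interval_cases m <;> simp_all <;> omega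
    · have := ih (by omega)
      have h2 : 2 ^ (m - 1) * 2 = 2 ^ (m + 1 - 1) := by
        rw [← pow_succ]; congr 1; omega
      omega

lemma VSC.norm_congr_term (p : ℕ) [hp : Fact p.Prime] (s i : ℕ) (hs : 0 < s)
    (hi : i < 2 * s) :
    padicNorm p (bernoulli i * ((2 * s).choose i) *
      ((p:ℚ) ^ (2 * s + 1 - i) / (2 * s + 1 - i : ℕ))) ≤ (p:ℚ)⁻¹ := by
  have hp1 : 1 < p := hp.out.one_lt
  have hppos : (0:ℚ) < p := by exact_mod_cast hp.out.pos
  set n := 2 * s with hn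
  set j := n + 1 - i with hjdef
  rcases Nat.even_or_odd i with hev | hodd
  · -- i even: j ≥ 3
    have hj3 : 3 ≤ j := by
      rcases hev with ⟨m, rfl⟩
      omega
    have hnorm3 : padicNorm p ((p:ℚ) ^ j / j) ≤ (p:ℚ) ^ (-2 : ℤ) := by
      have hlt : j < p ^ (j - 1) := lt_of_lt_of_le (VSC.two_pow_aux j hj3)
        (Nat.pow_le_pow_left hp1 _)
      have := VSC.padicNorm_pow_div_le p j (j - 1) (by omega) hlt
      calc padicNorm p ((p:ℚ) ^ j / j) ≤ (p:ℚ) ^ (((j - 1 : ℕ) : ℤ) - 1 - j) := this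
        _ ≤ (p:ℚ) ^ (-2 : ℤ) := by
            apply zpow_le_zpow_right₀ (by exact_mod_cast hp1.le)
            omega
    have hber : padicNorm p (bernoulli i) ≤ p := by
      have h1 := VSC.norm_p_mul_bernoulli_le_one p i
      rw [padicNorm.mul, padicNorm.padicNorm_p_of_prime] at h1
      calc padicNorm p (bernoulli i) = (p:ℚ) * ((p:ℚ)⁻¹ * padicNorm p (bernoulli i)) := by
            field_simp
        _ ≤ (p:ℚ) * 1 := mul_le_mul_of_nonneg_left h1 hppos.le
        _ = p := mul_one _
    rw [padicNorm.mul, padicNorm.mul]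
    calc padicNorm p (bernoulli i) * padicNorm p ((n.choose i : ℕ) : ℚ) *
          padicNorm p ((p:ℚ) ^ j / j)
        ≤ (p:ℚ) * 1 * (p:ℚ) ^ (-2 : ℤ) := by
          apply mul_le_mul _ hnorm3 (padicNorm.nonneg _) (by positivity)
          exact mul_le_mul hber (padicNorm.of_nat _) (padicNorm.nonneg _) hppos.le
      _ = (p:ℚ)⁻¹ := by
          rw [mul_one, show (-2 : ℤ) = -1 + -1 by ring, zpow_add₀ hppos.ne', zpow_neg_one]
          field_simp
  · rcases eq_or_ne i 1 with rfl | hi1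
    · -- i = 1
      have hj : j = n := by omega
      have hn0 : ((n : ℕ) : ℚ) ≠ 0 := by
        have : 0 < n := by omega
        exact_mod_cast this.ne'
      have hT : bernoulli 1 * ((n.choose 1 : ℕ) : ℚ) * ((p:ℚ) ^ j / j) =
          -((p:ℚ) ^ n / 2) := by
        rw [hj, bernoulli_one, Nat.choose_one_right]
        field_simp
      rw [hT, padicNorm.neg, padicNorm.div, VSC.padicNorm_pow,
        padicNorm.padicNorm_p_of_prime]
      rcases eq_or_ne p 2 with rfl | hp2
      · rw [show padicNorm 2 (2:ℚ) = 2⁻¹ from padicNorm.padicNorm_p_of_prime]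
        obtain ⟨m, hm⟩ : ∃ m, n = m + 2 := ⟨n - 2, by omega⟩
        rw [hm, pow_succ, mul_div_assoc]
        push_cast
        rw [div_self (by norm_num : (2:ℚ)⁻¹ ≠ 0), mul_one]
        calc ((2:ℚ)⁻¹) ^ (m + 1) ≤ ((2:ℚ)⁻¹) ^ 1 :=
              pow_le_pow_of_le_one (by positivity) (by norm_num) (by omega)
          _ = (2:ℚ)⁻¹ := pow_one _
      · have h2 : padicNorm p (2:ℚ) = 1 := by
          have := padicNorm.nat_eq_one_iff (p := p) 2
          have hnd : ¬ p ∣ 2 := by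
            intro hd
            exact hp2 ((Nat.prime_dvd_prime_iff_eq hp.out Nat.prime_two).mp hd)
          exact_mod_cast (padicNorm.nat_eq_one_iff 2).mpr hnd
        rw [h2, div_one]
        calc ((p:ℚ)⁻¹) ^ n ≤ ((p:ℚ)⁻¹) ^ 1 := by
              apply pow_le_pow_of_le_one (by positivity) (by
                rw [inv_le_one_iff₀]; right; exact_mod_cast hp1.le) (by omega)
          _ = (p:ℚ)⁻¹ := pow_one _
    · -- i odd ≥ 3
      have hz : bernoulli i = 0 := by
        rw [bernoulli_eq_bernoulli'_of_ne_one hi1]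
        exact bernoulli'_eq_zero_of_odd hodd (by rcases hodd with ⟨m, rfl⟩; omega)
      rw [hz]
      simp [padicNorm.zero]

lemma VSC.norm_congr (p : ℕ) [hp : Fact p.Prime] (s : ℕ) (hs : 0 < s) :
    padicNorm p ((p:ℚ) * bernoulli (2 * s) -
      ((∑ k ∈ Finset.range p, k ^ (2 * s) : ℕ) : ℚ)) ≤ (p:ℚ)⁻¹ := by
  have hkey := VSC.key_identity p (2 * s)
  have : (p:ℚ) * bernoulli (2 * s) - ((∑ k ∈ Finset.range p, k ^ (2 * s) : ℕ) : ℚ) =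
      -∑ i ∈ range (2 * s), bernoulli i * ((2 * s).choose i) *
        ((p:ℚ) ^ (2 * s + 1 - i) / (2 * s + 1 - i : ℕ)) := by
    rw [hkey]; ring
  rw [this, padicNorm.neg]
  exact padicNorm.sum_le' (fun i hi => VSC.norm_congr_term p s i hs (mem_range.mp hi))
    (by positivity)

lemma VSC.sum_pow_zmod (p : ℕ) [hp : Fact p.Prime] (n : ℕ) (hn : 0 < n) :
    ((∑ k ∈ Finset.range p, k ^ n : ℕ) : ZMod p) =
      if (p - 1) ∣ n then (-1 : ZMod p) else 0 := by
  have hcast : ((∑ k ∈ Finset.range p, k ^ n : ℕ) : ZMod p) =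
      ∑ x : ZMod p, x ^ n := by
    push_cast
    refine Finset.sum_nbij' (fun k => (k : ZMod p)) (fun x => x.val) ?_ ?_ ?_ ?_ ?_
    · intro a _; exact Finset.mem_univ _
    · intro x _; exact mem_range.mpr (ZMod.val_lt x)
    · intro a ha; exact ZMod.val_cast_of_lt (mem_range.mp ha)
    · intro x _; exact ZMod.natCast_rightInverse x
    · intro a _; rfl
  rw [hcast]
  classical
  have hq : Fintype.card (ZMod p) = p := ZMod.card p
  let φ : (ZMod p)ˣ ↪ ZMod p := ⟨fun x => (x : ZMod p), Units.val_injective⟩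
  have huniv : (Finset.univ.map φ) = Finset.univ \ {(0 : ZMod p)} := by
    ext x
    simp only [Finset.mem_map, Finset.mem_univ, Function.Embedding.coeFn_mk, true_and,
      Finset.mem_sdiff, Finset.mem_singleton, φ]
    exact isUnit_iff_ne_zero
  calc ∑ x : ZMod p, x ^ n
      = ∑ x ∈ (Finset.univ \ {(0 : ZMod p)} : Finset (ZMod p)), x ^ n := by
        rw [← Finset.sum_sdiff ({(0 : ZMod p)} : Finset (ZMod p)).subset_univ,
          Finset.sum_singleton, zero_pow hn.ne', add_zero]
    _ = ∑ x : (ZMod p)ˣ, ((x : ZMod p) ^ n) := by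
        rw [← huniv, Finset.sum_map]
        rfl
    _ = if (p - 1) ∣ n then (-1 : ZMod p) else 0 := by
        rw [FiniteField.sum_pow_units (ZMod p) n, hq]

/-- Von Staudt–Clausen characterization: a prime `p` divides the denominator of the
`s`-th Bernoulli number (classical even index `B_{2s}`, i.e. the convention
`z/(e^z-1) = 1 - z/2 - ∑_{s≥1} B_s z^{2s}/(2s)!`) if and only if `p - 1` divides `2s`. -/
theorem prime_dvd_bernoulli_den_iff (p : ℕ) (hp : p.Prime) (s : ℕ) (hs : 0 < s) :
    p ∣ (bernoulli (2 * s)).den ↔ (p - 1) ∣ 2 * s := by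
  haveI : Fact p.Prime := ⟨hp⟩
  haveI : Fact (1 < p) := ⟨hp.one_lt⟩
  have hppos : (0:ℚ) < p := by exact_mod_cast hp.pos
  set S : ℕ := ∑ k ∈ Finset.range p, k ^ (2 * s) with hSdef
  have hcong : padicNorm p ((p:ℚ) * bernoulli (2 * s) - (S:ℚ)) ≤ (p:ℚ)⁻¹ :=
    VSC.norm_congr p s hs
  have hzm := VSC.sum_pow_zmod p (2 * s) (by omega)
  rw [VSC.dvd_den_iff]
  have hBrel : padicNorm p ((p:ℚ) * bernoulli (2 * s)) =
      (p:ℚ)⁻¹ * padicNorm p (bernoulli (2 * s)) := by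
    rw [padicNorm.mul, padicNorm.padicNorm_p_of_prime]
  have hsplit : (p:ℚ) * bernoulli (2 * s) = (S:ℚ) + ((p:ℚ) * bernoulli (2 * s) - (S:ℚ)) := by
    ring
  by_cases hd : (p - 1) ∣ 2 * s
  · simp only [hd, iff_true]
    have hS : ¬ p ∣ S := by
      intro h
      have h0 : (S : ZMod p) = 0 := (ZMod.natCast_eq_zero_iff S p).mpr h
      rw [hzm, if_pos hd] at h0
      exact one_ne_zero (neg_eq_zero.mp h0)
    have hSnorm : padicNorm p (S:ℚ) = 1 := by
      exact_mod_cast (padicNorm.nat_eq_one_iff S).mpr hS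
    have h1 : padicNorm p ((p:ℚ) * bernoulli (2 * s)) = 1 := by
      rw [hsplit, padicNorm.add_eq_max_of_ne, hSnorm]
      · apply max_eq_left
        rw [hSnorm] at *
        calc padicNorm p ((p:ℚ) * bernoulli (2 * s) - (S:ℚ)) ≤ (p:ℚ)⁻¹ := hcong
          _ ≤ 1 := by rw [inv_le_one_iff₀]; right; exact_mod_cast hp.one_lt.le
      · rw [hSnorm]
        intro hcontra
        have : (1:ℚ) ≤ (p:ℚ)⁻¹ := hcontra ▸ hcong
        have h2 : (p:ℚ)⁻¹ < 1 := by
          rw [inv_lt_one_iff₀]; right; exact_mod_cast hp.one_lt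
        linarith
    rw [hBrel] at h1
    have hBval : padicNorm p (bernoulli (2 * s)) = p := by
      field_simp at h1
      linarith [h1]
    rw [hBval]
    exact_mod_cast hp.one_lt
  · simp only [hd, iff_false]
    have hS : p ∣ S := by
      have h0 : (S : ZMod p) = 0 := by rw [hzm, if_neg hd]
      exact (ZMod.natCast_eq_zero_iff S p).mp h0
    have hSnorm : padicNorm p (S:ℚ) ≤ (p:ℚ)⁻¹ := by
      have hdvd : ((p:ℤ) ^ 1) ∣ (S:ℤ) := by
        simpa using Int.natCast_dvd_natCast.mpr hS
      have := (padicNorm.dvd_iff_norm_le (p := p) (n := 1) (z := (S:ℤ))).mp (by exact_mod_cast hdvd)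
      simpa using this
    have h2 : padicNorm p ((p:ℚ) * bernoulli (2 * s)) ≤ (p:ℚ)⁻¹ := by
      rw [hsplit]
      exact le_trans padicNorm.nonarchimedean (max_le hSnorm hcong)
    rw [hBrel] at h2
    push_neg
    calc padicNorm p (bernoulli (2 * s))
        = (p:ℚ) * ((p:ℚ)⁻¹ * padicNorm p (bernoulli (2 * s))) := by field_simp
      _ ≤ (p:ℚ) * (p:ℚ)⁻¹ := mul_le_mul_of_nonneg_left h2 hppos.le
      _ = 1 := by field_simp
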